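/- Let G be a countable group acting on a countable set X. If X has subexponential growth of orbits, then for every finite subset S ⊆ G and every δ > 0 there exists a moderate ℓ¹-function ν on X such that |ν(sx)/ν(x) − 1| < δ for every s ∈ S and every x ∈ X. -/

import Mathlib

open Filter

def orbitSet {G X : Type*} [Group G] [MulAction G X] (S : Finset G) (x : X) (n : ℕ) : Set X :=
  {y | ∃ l : List G, l.length ≤ n ∧ (∀ g ∈ l, g ∈ S) ∧ l.prod • x = y}

section helpers
variable {G X : Type*} [Group G] [MulAction G X]

lemma mem_orbitSet_self (F : Finset G) (x : X) (n : ℕ) : x ∈ orbitSet F x n :=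
  ⟨[], by simp⟩

lemma orbitSet_mono {F F' : Finset G} (hF : F ⊆ F') {n m : ℕ} (hnm : n ≤ m) (x : X) :
    orbitSet F x n ⊆ orbitSet F' x m := by
  rintro y ⟨l, hl, hmem, hprod⟩
  exact ⟨l, hl.trans hnm, fun g hg => hF (hmem g hg), hprod⟩

lemma smul_mem_orbitSet {F : Finset G} {g : G} (hg : g ∈ F) {x y : X} {n : ℕ}
    (hy : y ∈ orbitSet F x n) : g • y ∈ orbitSet F x (n + 1) := by
  obtain ⟨l, hl, hmem, hprod⟩ := hy
  refine ⟨g :: l, by simpa using hl, ?_, ?_⟩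
  · intro a ha
    rcases List.mem_cons.mp ha with h | h
    · exact h ▸ hg
    · exact hmem a h
  · rw [List.prod_cons, mul_smul, hprod]

lemma orbitSet_finite (F : Finset G) (x : X) (n : ℕ) : (orbitSet F x n).Finite := by
  induction n with
  | zero =>
    have : orbitSet F x 0 ⊆ {x} := by
      rintro y ⟨l, hl, -, hprod⟩
      have : l = [] := List.length_eq_zero_iff.mp (Nat.le_zero.mp hl)
      simp [this] at hprod
      simp [← hprod]
    exact (Set.finite_singleton x).subset this
  | succ n ih =>
    have hsub : orbitSet F x (n + 1) ⊆
        orbitSet F x n ∪ ⋃ g ∈ (F : Set G), (g • ·) '' orbitSet F x n := by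
      rintro y ⟨l, hl, hmem, hprod⟩
      match l with
      | [] => exact Or.inl ⟨[], by simpa using hprod⟩
      | g :: l' =>
        right
        refine Set.mem_biUnion (hmem g List.mem_cons_self) ?_
        refine ⟨l'.prod • x, ⟨l', ?_, fun a ha => hmem a (List.mem_cons_of_mem g ha), rfl⟩, ?_⟩
        · simpa using Nat.succ_le_succ_iff.mp (by simpa using hl)
        · show g • l'.prod • x = y
          rw [← mul_smul, ← List.prod_cons, hprod]
    refine Set.Finite.subset (ih.union ?_) hsub
    exact Set.Finite.biUnion F.finite_toSet (fun g _ => ih.image _)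

end helpers


lemma sumlemma {X : Type*} (B : ℕ → Finset X) (φ : ℕ → ℕ) (ds : ℕ → ℝ) (δ' : ℝ)
    (hδ'pos : 0 < δ') (hδ'half : δ' ≤ 1/2)
    (hφmono : Monotone φ)
    (N0 : ℕ) (hBcard : ∀ n, N0 ≤ n → ((B n).card : ℝ) ≤ Real.exp ((n:ℝ)/((φ n:ℝ)+1)))
    (hdsdef : ∀ n, ds n = min δ' (((φ n:ℝ)+1)⁻¹ +
      3*(Real.log ((n:ℝ)+2) - Real.log ((n:ℝ)+1))))
    (hgbound : Tendsto (fun n : ℕ => ((φ n:ℝ)+1)⁻¹ + 3*(((n:ℝ)+1)⁻¹)) atTop (nhds 0))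
    (hdspos : ∀ n, 0 < ds n) (hdsle : ∀ n, ds n ≤ δ')
    (hlogpos : ∀ n : ℕ, 0 ≤ Real.log ((n:ℝ)+2) - Real.log ((n:ℝ)+1))
    (hlogle : ∀ n : ℕ, Real.log ((n:ℝ)+2) - Real.log ((n:ℝ)+1) ≤ ((n:ℝ)+1)⁻¹) :
    Summable (fun n => ((B n).card : ℝ) * ∏ k ∈ Finset.range n, (1 - ds k)) := by
  have hprodnonneg : ∀ n, (0:ℝ) ≤ ∏ k ∈ Finset.range n, (1 - ds k) := by
    intro n
    exact Finset.prod_nonneg fun k _ => by have := (hdsle k).trans hδ'half; linarith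
  have hTle : ∀ n, ∏ k ∈ Finset.range n, (1 - ds k)
      ≤ Real.exp (-(∑ k ∈ Finset.range n, ds k)) := by
    intro n
    calc ∏ k ∈ Finset.range n, (1 - ds k)
        ≤ ∏ k ∈ Finset.range n, Real.exp (-(ds k)) := by
          apply Finset.prod_le_prod
          · intro k _; have := (hdsle k).trans hδ'half; linarith
          · intro k _; have := Real.add_one_le_exp (-(ds k)); linarith
      _ = Real.exp (-(∑ k ∈ Finset.range n, ds k)) := by
          rw [← Finset.sum_neg_distrib, Real.exp_sum]
  -- eventual form of ds
  have h0 : Tendsto (fun n : ℕ => ((φ n:ℝ)+1)⁻¹ +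
      3*(Real.log ((n:ℝ)+2) - Real.log ((n:ℝ)+1))) atTop (nhds 0) := by
    apply squeeze_zero (fun n => ?_) (fun n => ?_) hgbound
    · have h1 : (0:ℝ) < ((φ n : ℝ) + 1)⁻¹ := by positivity
      have := hlogpos n
      linarith
    · have := hlogle n
      have h1 : (0:ℝ) ≤ ((φ n : ℝ) + 1)⁻¹ := by positivity
      linarith
  obtain ⟨N1, hN1⟩ := eventually_atTop.mp ((h0.eventually_lt_const hδ'pos).mono
    (fun n h => le_of_lt h))
  have hdseq : ∀ k, N1 ≤ k → ds k = ((φ k:ℝ)+1)⁻¹ +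
      3*(Real.log ((k:ℝ)+2) - Real.log ((k:ℝ)+1)) := by
    intro k hk
    rw [hdsdef k, min_eq_right (hN1 k hk)]
  -- telescoping
  have htel : ∀ m : ℕ, ∑ k ∈ Finset.range m,
      (Real.log ((k:ℝ)+2) - Real.log ((k:ℝ)+1)) = Real.log ((m:ℝ)+1) := by
    intro m
    have h := Finset.sum_range_sub (fun k : ℕ => Real.log ((k:ℝ)+1)) m
    have h2 : ∑ k ∈ Finset.range m, (Real.log ((k:ℝ)+2) - Real.log ((k:ℝ)+1))
        = ∑ k ∈ Finset.range m,
          (Real.log (((k+1:ℕ):ℝ)+1) - Real.log ((k:ℝ)+1)) := by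
      apply Finset.sum_congr rfl
      intro k _
      push_cast
      ring_nf
    rw [h2, h]
    norm_num
  -- sum lower bound
  have hsumlb : ∀ n, N1 ≤ n →
      (n:ℝ)/((φ n:ℝ)+1) + 3*Real.log ((n:ℝ)+1)
        - ((N1:ℝ) + 3*Real.log ((N1:ℝ)+1)) ≤ ∑ k ∈ Finset.range n, ds k := by
    intro n hn
    have hsplit : ∑ k ∈ Finset.Ico N1 n, ds k ≤ ∑ k ∈ Finset.range n, ds k := by
      rw [Finset.sum_Ico_eq_sub _ hn]
      have : (0:ℝ) ≤ ∑ k ∈ Finset.range N1, ds k :=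
        Finset.sum_nonneg fun k _ => (hdspos k).le
      linarith
    have hIco : ∑ k ∈ Finset.Ico N1 n, ds k
        = ∑ k ∈ Finset.Ico N1 n, (((φ k:ℝ)+1)⁻¹
            + 3*(Real.log ((k:ℝ)+2) - Real.log ((k:ℝ)+1))) :=
      Finset.sum_congr rfl (fun k hk => hdseq k (Finset.mem_Ico.mp hk).1)
    have hpart1 : ((n - N1 : ℕ) : ℝ) * ((φ n:ℝ)+1)⁻¹
        ≤ ∑ k ∈ Finset.Ico N1 n, ((φ k:ℝ)+1)⁻¹ := by
      have hb : ∀ k ∈ Finset.Ico N1 n, ((φ n:ℝ)+1)⁻¹ ≤ ((φ k:ℝ)+1)⁻¹ := by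
        intro k hk
        have hk2 : k ≤ n := (Finset.mem_Ico.mp hk).2.le
        have hle : (φ k : ℝ) + 1 ≤ (φ n : ℝ) + 1 := by
          have := hφmono hk2
          exact_mod_cast by omega
        exact inv_anti₀ (by positivity) hle
      have := Finset.card_nsmul_le_sum (Finset.Ico N1 n)
        (fun k => ((φ k:ℝ)+1)⁻¹) (((φ n:ℝ)+1)⁻¹) hb
      simpa [Nat.card_Ico, nsmul_eq_mul] using this
    have hpart2 : ∑ k ∈ Finset.Ico N1 n,
        (Real.log ((k:ℝ)+2) - Real.log ((k:ℝ)+1))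
          = Real.log ((n:ℝ)+1) - Real.log ((N1:ℝ)+1) := by
      rw [Finset.sum_Ico_eq_sub _ hn, htel n, htel N1]
    have hsum_split : ∑ k ∈ Finset.Ico N1 n, (((φ k:ℝ)+1)⁻¹
        + 3*(Real.log ((k:ℝ)+2) - Real.log ((k:ℝ)+1)))
        = (∑ k ∈ Finset.Ico N1 n, ((φ k:ℝ)+1)⁻¹)
          + 3 * ∑ k ∈ Finset.Ico N1 n,
            (Real.log ((k:ℝ)+2) - Real.log ((k:ℝ)+1)) := by
      rw [Finset.sum_add_distrib, Finset.mul_sum]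
    have hcast : ((n - N1 : ℕ):ℝ) = (n:ℝ) - (N1:ℝ) := by
      exact Nat.cast_sub hn
    have hinvle1 : ((φ n:ℝ)+1)⁻¹ ≤ 1 := by
      rw [inv_le_one_iff₀]
      right
      have : (0:ℝ) ≤ (φ n : ℝ) := Nat.cast_nonneg _
      linarith
    have hinvpos : (0:ℝ) < ((φ n:ℝ)+1)⁻¹ := by positivity
    have hfrac : (n:ℝ)/((φ n:ℝ)+1) - (N1:ℝ) ≤ ((n:ℝ) - (N1:ℝ)) * ((φ n:ℝ)+1)⁻¹ := by
      have hN1nonneg : (0:ℝ) ≤ (N1:ℝ) := Nat.cast_nonneg _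
      have h1 : (N1:ℝ) * ((φ n:ℝ)+1)⁻¹ ≤ (N1:ℝ) := by nlinarith
      rw [div_eq_mul_inv]
      nlinarith
    calc (n:ℝ)/((φ n:ℝ)+1) + 3*Real.log ((n:ℝ)+1) - ((N1:ℝ) + 3*Real.log ((N1:ℝ)+1))
        ≤ ((n:ℝ) - (N1:ℝ)) * ((φ n:ℝ)+1)⁻¹
          + 3*(Real.log ((n:ℝ)+1) - Real.log ((N1:ℝ)+1)) := by linarith
      _ ≤ (∑ k ∈ Finset.Ico N1 n, ((φ k:ℝ)+1)⁻¹)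
          + 3 * ∑ k ∈ Finset.Ico N1 n,
            (Real.log ((k:ℝ)+2) - Real.log ((k:ℝ)+1)) := by
          rw [hpart2, ← hcast]
          linarith
      _ = ∑ k ∈ Finset.Ico N1 n, ds k := by rw [hIco, hsum_split]
      _ ≤ ∑ k ∈ Finset.range n, ds k := hsplit
  -- threshold for the log term
  have hlogtop : Tendsto (fun n : ℕ => Real.log ((n:ℝ)+1)) atTop atTop :=
    Real.tendsto_log_atTop.comp
      (tendsto_atTop_add_const_right _ _ tendsto_natCast_atTop_atTop)
  obtain ⟨N5, hN5⟩ := eventually_atTop.mp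
    (hlogtop.eventually_ge_atTop ((N1:ℝ) + 3*Real.log ((N1:ℝ)+1)))
  set q : ℕ := max (max N1 N5) N0 with hqdef
  have hfinal : ∀ n, q ≤ n →
      ((B n).card : ℝ) * ∏ k ∈ Finset.range n, (1 - ds k) ≤ (((n:ℝ)+1)^2)⁻¹ := by
    intro n hn
    have hnN1 : N1 ≤ n := le_trans (le_trans (le_max_left _ _) (le_max_left _ _)) hn
    have hnN5 : N5 ≤ n := le_trans (le_trans (le_max_right _ _) (le_max_left _ _)) hn
    have hnN0 : N0 ≤ n := le_trans (le_max_right _ _) hn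
    have h1 := hBcard n hnN0
    have h2 := hTle n
    have h3 : (n:ℝ)/((φ n:ℝ)+1) + 2*Real.log ((n:ℝ)+1) ≤ ∑ k ∈ Finset.range n, ds k := by
      have := hsumlb n hnN1
      have := hN5 n hnN5
      linarith
    calc ((B n).card : ℝ) * ∏ k ∈ Finset.range n, (1 - ds k)
        ≤ Real.exp ((n:ℝ)/((φ n:ℝ)+1)) * Real.exp (-(∑ k ∈ Finset.range n, ds k)) :=
          mul_le_mul h1 h2 (hprodnonneg n) (Real.exp_pos _).le
      _ = Real.exp ((n:ℝ)/((φ n:ℝ)+1) - ∑ k ∈ Finset.range n, ds k) := by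
          rw [← Real.exp_add]; ring_nf
      _ ≤ Real.exp (-(2*Real.log ((n:ℝ)+1))) := Real.exp_le_exp.mpr (by linarith)
      _ = (((n:ℝ)+1)^2)⁻¹ := by
          rw [Real.exp_neg]
          congr 1
          rw [two_mul, Real.exp_add, Real.exp_log (by positivity)]
          ring
  refine (summable_nat_add_iff q).1 ?_
  have hsq : Summable (fun n : ℕ => (((n:ℝ)+1)^2)⁻¹) := by
    have h1 : Summable (fun n : ℕ => 1 / (n:ℝ) ^ 2) :=
      Real.summable_one_div_nat_pow.mpr (by norm_num)
    have h2 := (summable_nat_add_iff 1).2 h1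
    apply h2.congr
    intro n
    push_cast
    rw [one_div]
  apply Summable.of_nonneg_of_le
    (fun n => mul_nonneg (Nat.cast_nonneg _) (hprodnonneg _)) _ hsq
  intro n
  refine (hfinal (n+q) (by omega)).trans ?_
  apply inv_anti₀ (by positivity)
  have h1 : ((n:ℝ)+1) ≤ (((n+q:ℕ):ℝ)+1) := by
    push_cast
    have : (0:ℝ) ≤ (q:ℝ) := Nat.cast_nonneg _
    linarith
  nlinarith [h1, show (0:ℝ) ≤ (n:ℝ)+1 by positivity]

theorem moderate_l1_close_to_invariant
    {G X : Type*} [Group G] [MulAction G X] [Countable G] [Countable X]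
    (hsub : ∀ (S : Finset G) (x : X),
      Tendsto (fun n : ℕ => (Nat.card (orbitSet S x n) : ℝ) ^ (1 / (n : ℝ))) atTop (nhds 1))
    (S : Finset G) (δ : ℝ) (hδ : 0 < δ) :
    ∃ ν : X → ℝ, Summable ν ∧ (∀ x, 0 < ν x) ∧
      (∀ g : G, Tendsto (fun x : X => ν (g • x) / ν x) cofinite (nhds 1)) ∧
      ∀ s ∈ S, ∀ x : X, |ν (s • x) / ν x - 1| < δ := by
  classical
  rcases isEmpty_or_nonempty X with hX | hX
  · refine ⟨fun _ => 1, Summable.of_finite, fun x => one_pos, fun g => ?_, fun s _ x => (IsEmpty.false x).elim⟩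
    haveI : Finite X := Finite.of_subsingleton
    rw [Filter.cofinite_eq_bot]
    exact tendsto_bot
  -- the closeness parameter
  set δ' : ℝ := min (1/2) (δ/3) with hδ'def
  have hδ'pos : 0 < δ' := lt_min (by norm_num) (by linarith)
  have hδ'half : δ' ≤ 1/2 := min_le_left _ _
  have hδ'δ : 2 * δ' < δ := by
    have : δ' ≤ δ/3 := min_le_right _ _
    linarith
  -- the big construction
  obtain ⟨B, ds, hBmono, hBexh, hBS, hBG, hdspos, hdsle, hds0, hsumw⟩ :
      ∃ (B : ℕ → Finset X) (ds : ℕ → ℝ),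
        (∀ m n, m ≤ n → B m ⊆ B n) ∧
        (∀ x, ∃ n, x ∈ B n) ∧
        (∀ s ∈ S, ∀ n, ∀ x ∈ B n, s • x ∈ B (n+1) ∧ s⁻¹ • x ∈ B (n+1)) ∧
        (∀ g : G, ∃ J : ℕ, ∀ n, J ≤ n → ∀ x ∈ B n, g • x ∈ B (n+1) ∧ g⁻¹ • x ∈ B (n+1)) ∧
        (∀ n, 0 < ds n) ∧ (∀ n, ds n ≤ δ') ∧
        Tendsto ds atTop (nhds 0) ∧
        Summable (fun n => ((B n).card : ℝ) * ∏ k ∈ Finset.range n, (1 - ds k)) := by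
    -- enumerations
    obtain ⟨eX, heX⟩ := exists_surjective_nat X
    obtain ⟨eG, heG⟩ := exists_surjective_nat G
    -- increasing symmetric alphabets
    set Fk : ℕ → Finset G := fun j => (S ∪ S.image (·⁻¹)) ∪
        ((Finset.range (j+1)).image eG ∪ ((Finset.range (j+1)).image eG).image (·⁻¹))
      with hFkdef
    have hFkmono : ∀ {j j' : ℕ}, j ≤ j' → Fk j ⊆ Fk j' := by
      intro j j' h
      apply Finset.union_subset_union (subset_refl _)
      apply Finset.union_subset_union
      · exact Finset.image_subset_image (Finset.range_subset_range.mpr (by omega))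
      · exact Finset.image_subset_image
          (Finset.image_subset_image (Finset.range_subset_range.mpr (by omega)))
    have hSFk : ∀ j : ℕ, ∀ s ∈ S, s ∈ Fk j ∧ s⁻¹ ∈ Fk j := by
      intro j s hs
      constructor
      · exact Finset.mem_union_left _ (Finset.mem_union_left _ hs)
      · exact Finset.mem_union_left _ (Finset.mem_union_right _
          (Finset.mem_image_of_mem _ hs))
    have hGFk : ∀ g : G, ∃ j, g ∈ Fk j ∧ g⁻¹ ∈ Fk j := by
      intro g
      obtain ⟨a, ha⟩ := heG g
      refine ⟨a, ?_, ?_⟩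
      · refine Finset.mem_union_right _ (Finset.mem_union_left _ ?_)
        exact ha ▸ Finset.mem_image_of_mem _ (Finset.mem_range.mpr (by omega))
      · refine Finset.mem_union_right _ (Finset.mem_union_right _ ?_)
        exact Finset.mem_image_of_mem _
          (ha ▸ Finset.mem_image_of_mem _ (Finset.mem_range.mpr (by omega)))
    -- subexponential counting for orbit sets
    have hcard : ∀ (F : Finset G) (x : X) (ε : ℝ), 0 < ε →
        ∀ᶠ n in atTop, (Nat.card (orbitSet F x n) : ℝ) ≤ Real.exp (ε * n) := by
      intro F x ε hε
      have h1 : (1:ℝ) < Real.exp ε := by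
        have := Real.add_one_le_exp ε
        linarith
      have h2 := (hsub F x).eventually_lt_const h1
      filter_upwards [h2, eventually_ge_atTop 1] with n hn hn1
      have hc0 : (0:ℝ) ≤ (Nat.card (orbitSet F x n) : ℝ) := Nat.cast_nonneg _
      have hne : ((n:ℝ)) ≠ 0 := by
        have : (0:ℕ) < n := hn1
        exact_mod_cast this.ne'
      have hkey : (((Nat.card (orbitSet F x n) : ℝ)) ^ (1/(n:ℝ))) ^ (n:ℕ)
          = (Nat.card (orbitSet F x n) : ℝ) := by
        rw [← Real.rpow_natCast ((Nat.card (orbitSet F x n) : ℝ) ^ (1/(n:ℝ))) n,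
          ← Real.rpow_mul hc0, one_div, inv_mul_cancel₀ hne, Real.rpow_one]
      calc (Nat.card (orbitSet F x n) : ℝ)
          = (((Nat.card (orbitSet F x n) : ℝ)) ^ (1/(n:ℝ))) ^ (n:ℕ) := hkey.symm
        _ ≤ (Real.exp ε) ^ (n:ℕ) :=
            pow_le_pow_left₀ (Real.rpow_nonneg hc0 _) hn.le n
        _ = Real.exp (ε * n) := by rw [← Real.exp_nat_mul, mul_comm]
    -- summed counting
    have hD : ∀ j : ℕ, ∀ᶠ n in atTop,
        ((∑ i ∈ Finset.range (j+1), Nat.card (orbitSet (Fk j) (eX i) n) : ℕ) : ℝ)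
          ≤ Real.exp ((n:ℝ) / (j+1)) := by
      intro j
      have hε : (0:ℝ) < 1/(2*((j:ℝ)+1)) := by positivity
      have hall : ∀ᶠ n in atTop, ∀ i ∈ Finset.range (j+1),
          (Nat.card (orbitSet (Fk j) (eX i) n) : ℝ)
            ≤ Real.exp ((1/(2*((j:ℝ)+1))) * n) :=
        (Filter.eventually_all_finset _).mpr (fun i _ => hcard _ _ _ hε)
      have htop : Tendsto (fun n : ℕ => Real.exp ((1/(2*((j:ℝ)+1))) * n)) atTop atTop :=
        Real.tendsto_exp_atTop.comp (tendsto_natCast_atTop_atTop.const_mul_atTop hε)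
      have hbig : ∀ᶠ n : ℕ in atTop, ((j:ℝ)+1) ≤ Real.exp ((1/(2*((j:ℝ)+1))) * n) :=
        htop.eventually_ge_atTop _
      filter_upwards [hall, hbig] with n h1 h2
      push_cast
      calc (∑ i ∈ Finset.range (j+1), (Nat.card (orbitSet (Fk j) (eX i) n) : ℝ))
          ≤ ∑ _i ∈ Finset.range (j+1), Real.exp ((1/(2*((j:ℝ)+1))) * n) :=
            Finset.sum_le_sum h1
        _ = ((j:ℝ)+1) * Real.exp ((1/(2*((j:ℝ)+1))) * n) := by
            rw [Finset.sum_const, Finset.card_range, nsmul_eq_mul]; push_cast; ring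
        _ ≤ Real.exp ((1/(2*((j:ℝ)+1))) * n) * Real.exp ((1/(2*((j:ℝ)+1))) * n) :=
            mul_le_mul_of_nonneg_right h2 (Real.exp_pos _).le
        _ = Real.exp ((n:ℝ) / (j+1)) := by
            rw [← Real.exp_add]; congr 1; field_simp; ring
    choose N hN using fun j => eventually_atTop.mp (hD j)
    -- thresholds
    set M : ℕ → ℕ := fun j => j + ∑ i ∈ Finset.range (j+1), N i with hMdef
    have hMj : ∀ j, j ≤ M j := fun j => Nat.le_add_right _ _ |>.trans_eq rfl
    have hMN : ∀ j, N j ≤ M j := by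
      intro j
      have : N j ≤ ∑ i ∈ Finset.range (j+1), N i :=
        Finset.single_le_sum (fun i _ => Nat.zero_le _) (Finset.self_mem_range_succ j)
      exact le_trans this (Nat.le_add_left _ _)
    set φ : ℕ → ℕ := fun n => Nat.findGreatest (fun j => M j ≤ n) n with hφdef
    have hφspec : ∀ n, φ n ≠ 0 → M (φ n) ≤ n := by
      intro n h
      exact Nat.findGreatest_of_ne_zero (P := fun j => M j ≤ n) (m := φ n) rfl h
    have hφmono : Monotone φ := by
      intro a b hab
      exact Nat.findGreatest_mono (fun j (hj : M j ≤ a) => hj.trans hab) hab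
    have hφ1 : ∀ j n, M j ≤ n → j ≤ φ n :=
      fun j n h => Nat.le_findGreatest ((hMj j).trans h) h
    have hφtop : Tendsto φ atTop atTop :=
      tendsto_atTop_atTop.mpr (fun j => ⟨M j, fun n hn => hφ1 j n hn⟩)
    have hMφ : ∀ n, M 0 ≤ n → N (φ n) ≤ n := by
      intro n hn
      rcases Nat.eq_zero_or_pos (φ n) with h | h
      · rw [h]; exact (hMN 0).trans hn
      · exact (hMN _).trans (hφspec n h.ne')
    -- the exhausting sets
    set B : ℕ → Finset X := fun n => (Finset.range (φ n + 1)).biUnion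
        (fun i => (orbitSet_finite (Fk (φ n)) (eX i) n).toFinset) with hBdef
    have hBmem : ∀ (x : X) (n : ℕ), x ∈ B n ↔
        ∃ i, i ≤ φ n ∧ x ∈ orbitSet (Fk (φ n)) (eX i) n := by
      intro x n
      simp [hBdef, Finset.mem_biUnion, Set.Finite.mem_toFinset, Nat.lt_succ_iff]
    have hBmono : ∀ m n : ℕ, m ≤ n → B m ⊆ B n := by
      intro m n hmn x hx
      rw [hBmem] at hx ⊢
      obtain ⟨i, hi, hx⟩ := hx
      exact ⟨i, hi.trans (hφmono hmn), orbitSet_mono (hFkmono (hφmono hmn)) hmn _ hx⟩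
    have hBexh : ∀ x : X, ∃ n, x ∈ B n := by
      intro x
      obtain ⟨i, hi⟩ := heX x
      refine ⟨M i, (hBmem x (M i)).mpr ⟨i, hφ1 i (M i) le_rfl, ?_⟩⟩
      exact hi ▸ mem_orbitSet_self _ _ _
    have hBabsorb : ∀ (g : G) (j : ℕ), g ∈ Fk j → ∀ n, j ≤ φ n →
        ∀ x ∈ B n, g • x ∈ B (n+1) := by
      intro g j hg n hjn x hx
      rw [hBmem] at hx
      obtain ⟨i, hi, hx⟩ := hx
      rw [hBmem]
      refine ⟨i, hi.trans (hφmono (Nat.le_succ n)), ?_⟩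
      exact orbitSet_mono (hFkmono (hφmono (Nat.le_succ n))) le_rfl _
        (smul_mem_orbitSet (hFkmono hjn hg) hx)
    have hBcard : ∀ n, M 0 ≤ n → ((B n).card : ℝ) ≤ Real.exp ((n:ℝ) / (φ n + 1)) := by
      intro n hn
      have h1 : (B n).card ≤ ∑ i ∈ Finset.range (φ n + 1),
          Nat.card (orbitSet (Fk (φ n)) (eX i) n) := by
        refine (Finset.card_biUnion_le).trans (Finset.sum_le_sum ?_)
        intro i _
        rw [Nat.card_coe_set_eq, Set.ncard_eq_toFinset_card _ (orbitSet_finite _ _ _)]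
      have h2 := hN (φ n) n (hMφ n hn)
      calc ((B n).card : ℝ) ≤ ((∑ i ∈ Finset.range (φ n + 1),
            Nat.card (orbitSet (Fk (φ n)) (eX i) n) : ℕ) : ℝ) := by exact_mod_cast h1
        _ ≤ Real.exp ((n:ℝ) / (φ n + 1)) := by exact_mod_cast h2
    -- the step sequence
    set ds : ℕ → ℝ := fun n =>
        min δ' ((((φ n : ℝ)) + 1)⁻¹ + 3*(Real.log ((n:ℝ)+2) - Real.log ((n:ℝ)+1)))
      with hdsdef
    have hlogpos : ∀ n : ℕ, 0 ≤ Real.log ((n:ℝ)+2) - Real.log ((n:ℝ)+1) := by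
      intro n
      have := Real.log_le_log (by positivity : (0:ℝ) < (n:ℝ)+1)
        (by linarith : ((n:ℝ)+1) ≤ (n:ℝ)+2)
      linarith
    have hlogle : ∀ n : ℕ, Real.log ((n:ℝ)+2) - Real.log ((n:ℝ)+1) ≤ ((n:ℝ)+1)⁻¹ := by
      intro n
      have h1 : (0:ℝ) < (n:ℝ)+1 := by positivity
      have h2 : (0:ℝ) < (n:ℝ)+2 := by positivity
      have := Real.log_le_sub_one_of_pos (show (0:ℝ) < ((n:ℝ)+2)/((n:ℝ)+1) by positivity)
      rw [Real.log_div h2.ne' h1.ne'] at this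
      have heq : ((n:ℝ)+2)/((n:ℝ)+1) - 1 = ((n:ℝ)+1)⁻¹ := by
        rw [div_sub_one h1.ne']
        ring_nf
      linarith [heq ▸ this]
    have hdspos : ∀ n, 0 < ds n := by
      intro n
      refine lt_min hδ'pos ?_
      have h1 : (0:ℝ) < ((φ n : ℝ) + 1)⁻¹ := by positivity
      have := hlogpos n
      linarith
    have hdsle : ∀ n, ds n ≤ δ' := fun n => min_le_left _ _
    have hφR : Tendsto (fun n => ((φ n : ℝ) + 1)) atTop atTop :=
      tendsto_atTop_add_const_right _ _ (tendsto_natCast_atTop_atTop.comp hφtop)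
    have hinv0 : Tendsto (fun n => ((φ n : ℝ) + 1)⁻¹) atTop (nhds 0) :=
      tendsto_inv_atTop_zero.comp hφR
    have hgbound : Tendsto (fun n : ℕ =>
        ((φ n : ℝ) + 1)⁻¹ + 3*(((n:ℝ)+1)⁻¹)) atTop (nhds 0) := by
      have h2 : Tendsto (fun n : ℕ => 3*(((n:ℝ)+1)⁻¹)) atTop (nhds 0) := by
        have := tendsto_one_div_add_atTop_nhds_zero_nat (𝕜 := ℝ)
        simp only [one_div] at this
        simpa using this.const_mul 3
      simpa using hinv0.add h2
    have hds0 : Tendsto ds atTop (nhds 0) := by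
      apply squeeze_zero (fun n => (hdspos n).le) _ hgbound
      intro n
      refine (min_le_right _ _).trans ?_
      have := hlogle n
      linarith
    refine ⟨B, ds, hBmono, hBexh, ?_, ?_, hdspos, hdsle, hds0, ?_⟩
    · -- S absorption
      intro s hs n x hx
      obtain ⟨h1, h2⟩ := hSFk (φ n) s hs
      exact ⟨hBabsorb s (φ n) h1 n le_rfl x hx, hBabsorb s⁻¹ (φ n) h2 n le_rfl x hx⟩
    · -- G absorption
      intro g
      obtain ⟨j, hg1, hg2⟩ := hGFk g
      refine ⟨M j, fun n hn x hx => ?_⟩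
      have hjφ : j ≤ φ n := hφ1 j n hn
      exact ⟨hBabsorb g j hg1 n hjφ x hx, hBabsorb g⁻¹ j hg2 n hjφ x hx⟩
    · -- summability of the dominating series
      exact sumlemma B φ ds δ' hδ'pos hδ'half hφmono (M 0) hBcard
        (fun n => congrFun hdsdef n) hgbound hdspos hdsle hlogpos hlogle
  -- the weight sequence
  set T : ℕ → ℝ := fun n => ∏ k ∈ Finset.range n, (1 - ds k) with hTdef
  have hdslt : ∀ n, ds n < 1 := fun n => lt_of_le_of_lt (hdsle n) (by linarith)
  have hTpos : ∀ n, 0 < T n := by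
    intro n
    exact Finset.prod_pos fun k _ => by have := hdslt k; linarith
  have hTsucc : ∀ n, T (n+1) = T n * (1 - ds n) := fun n => Finset.prod_range_succ _ n
  -- ratio bound
  have Hratio : ∀ m m', (m' = m + 1 ∨ m = m' ∨ m = m' + 1) →
      |T m' / T m - 1| ≤ 2 * ds (min m m') := by
    intro m m' h
    rcases h with h | h | h
    · subst h
      have hTm := hTpos m
      have heq : T (m + 1) / T m - 1 = -ds m := by
        rw [hTsucc]; field_simp; ring
      rw [heq, abs_neg, abs_of_pos (hdspos m), min_eq_left (Nat.le_succ m)]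
      have := hdspos m
      linarith
    · subst h
      rw [div_self (hTpos m).ne', sub_self, abs_zero]
      have := hdspos (min m m)
      linarith
    · subst h
      have hTm := hTpos m'
      have hd := hdspos m'
      have hd2 : ds m' ≤ 1/2 := (hdsle m').trans hδ'half
      have hne2 : (1:ℝ) - ds m' ≠ 0 := by linarith
      have heq : T m' / T (m' + 1) - 1 = ds m' / (1 - ds m') := by
        rw [hTsucc]
        field_simp
        ring
      rw [heq, min_eq_right (Nat.le_succ m')]
      rw [abs_of_pos (div_pos hd (by linarith))]
      rw [div_le_iff₀ (by linarith : (0:ℝ) < 1 - ds m')]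
      nlinarith
  -- entry times
  set nx : X → ℕ := fun x => Nat.find (hBexh x) with hnxdef
  have hnxmem : ∀ x, x ∈ B (nx x) := fun x => Nat.find_spec (hBexh x)
  have hnxle : ∀ x n, x ∈ B n → nx x ≤ n := fun x n hn => Nat.find_min' (hBexh x) hn
  have hnxgt : ∀ x n, x ∉ B n → n < nx x := by
    intro x n hn
    by_contra h
    exact hn (hBmono _ _ (le_of_not_gt h) (hnxmem x))
  refine ⟨fun x => T (nx x), ?_, fun x => hTpos _, ?_, ?_⟩
  · -- summability
    have hwnonneg : ∀ n, (0:ℝ) ≤ ((B n).card : ℝ) * T n :=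
      fun n => mul_nonneg (Nat.cast_nonneg _) (hTpos n).le
    apply summable_of_sum_le (c := ∑' n, ((B n).card : ℝ) * T n)
      (fun x => (hTpos (nx x)).le)
    intro u
    rw [← Finset.sum_fiberwise_of_maps_to
      (fun x hx => Finset.mem_image_of_mem nx hx) (fun x => T (nx x))]
    have hstep : ∀ j ∈ u.image nx,
        ∑ x ∈ u.filter (fun x => nx x = j), T (nx x) ≤ ((B j).card : ℝ) * T j := by
      intro j _
      have heq : ∑ x ∈ u.filter (fun x => nx x = j), T (nx x)
          = ((u.filter (fun x => nx x = j)).card : ℝ) * T j := by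
        rw [Finset.sum_congr rfl (fun x hx => by rw [(Finset.mem_filter.mp hx).2]),
          Finset.sum_const, nsmul_eq_mul]
      rw [heq]
      refine mul_le_mul_of_nonneg_right ?_ (hTpos j).le
      have hsub : u.filter (fun x => nx x = j) ⊆ B j := by
        intro x hx
        obtain ⟨-, h2⟩ := Finset.mem_filter.mp hx
        exact h2 ▸ hnxmem x
      exact_mod_cast Finset.card_le_card hsub
    calc ∑ j ∈ u.image nx, ∑ x ∈ u.filter (fun x => nx x = j), T (nx x)
        ≤ ∑ j ∈ u.image nx, ((B j).card : ℝ) * T j := Finset.sum_le_sum hstep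
      _ ≤ ∑' n, ((B n).card : ℝ) * T n :=
          Summable.sum_le_tsum _ (fun i _ => hwnonneg i) hsumw
  · -- moderateness
    intro g
    rw [Metric.tendsto_nhds]
    intro ε hε
    obtain ⟨J, hJ⟩ := hBG g
    have hev : ∀ᶠ n in atTop, ds n < ε / 2 :=
      hds0.eventually_lt_const (by linarith)
    obtain ⟨N2, hN2⟩ := eventually_atTop.mp hev
    set N : ℕ := max J N2 with hNdef
    rw [eventually_cofinite]
    apply Set.Finite.subset ((B (N+1)).finite_toSet)
    intro x hx
    by_contra hxB
    apply hx
    have hm : N + 1 < nx x := hnxgt x (N+1) hxB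
    have hJN : J ≤ N := le_max_left _ _
    have hN2N : N2 ≤ N := le_max_right _ _
    have h1 : nx (g • x) ≤ nx x + 1 :=
      hnxle _ _ ((hJ (nx x) (by omega) x (hnxmem x)).1)
    have h2' : N + 1 ≤ nx (g • x) := by
      by_contra h
      push_neg at h
      have hgx : g • x ∈ B N := hBmono _ _ (by omega) (hnxmem (g • x))
      have hback := (hJ N hJN (g • x) hgx).2
      rw [inv_smul_smul] at hback
      exact hxB hback
    have h2 : nx x ≤ nx (g • x) + 1 := by
      have hback := (hJ (nx (g • x)) (by omega) (g • x) (hnxmem (g • x))).2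
      rw [inv_smul_smul] at hback
      exact hnxle _ _ hback
    rw [Real.dist_eq]
    have hmin : N2 ≤ min (nx x) (nx (g • x)) := le_min (by omega) (by omega)
    calc |T (nx (g • x)) / T (nx x) - 1| ≤ 2 * ds (min (nx x) (nx (g • x))) :=
          Hratio _ _ (by omega)
      _ < ε := by have := hN2 _ hmin; linarith
  · -- S-closeness
    intro s hs x
    have h1 : nx (s • x) ≤ nx x + 1 := hnxle _ _ ((hBS s hs (nx x) x (hnxmem x)).1)
    have h2 : nx x ≤ nx (s • x) + 1 := by
      have hback := (hBS s hs (nx (s • x)) (s • x) (hnxmem (s • x))).2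
      rw [inv_smul_smul] at hback
      exact hnxle _ _ hback
    calc |T (nx (s • x)) / T (nx x) - 1| ≤ 2 * ds (min (nx x) (nx (s • x))) :=
          Hratio _ _ (by omega)
      _ ≤ 2 * δ' := by have := hdsle (min (nx x) (nx (s • x))); linarith
      _ < δ := hδ'δ
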